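/- arXiv:2601.19030 — 2 statements merged into one kernel-verified Lean document; each statement's English description precedes it below -/
import Mathlib

section
/- Fix a positive integer d and γ ∈ [0,1). Let Ω be a finite type with nonnegative weights p : Ω → ℝ summing to 1, let X, X' : Ω → ℝ^d, and write E[·] for the p-weighted average over Ω. Assume Σ := E[X·Xᵀ] is invertible, and set Σcr := E[X·(X')ᵀ], A := Σ − γ·Σcr, Bπ := (Σ⁻¹·Σcr)ᵀ. Assume: (i) there exists θ₀ ∈ ℝ^d with X(ω)ᵀθ₀ = 1 and X'(ω)ᵀθ₀ = 1 for every ω with p(ω) > 0; (ii) E[X] = E[X'] = φ₀; and (iii) every complex eigenvalue μ of Bπ satisfies γ·|μ| < 1. Then A is invertible and the feature-dynamics coverage satisfies (1−γ)²·φ₀ᵀ·A⁻¹·Σ·A⁻ᵀ·φ₀ ≤ 1. -/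
open Matrix MeasureTheory ProbabilityTheory
open scoped Classical

noncomputable section

/-- Euclidean norm of a vector in `ℝ^d`. -/
def norm2 {d : ℕ} (v : Fin d → ℝ) : ℝ := Real.sqrt (v ⬝ᵥ v)

/-- The positive semidefinite square root of a matrix (junk value `0` if not PSD). -/
def psdSqrt {d : ℕ} (M : Matrix (Fin d) (Fin d) ℝ) : Matrix (Fin d) (Fin d) ℝ :=
  if h : M.PosSemidef then
    (h.1.eigenvectorUnitary : Matrix (Fin d) (Fin d) ℝ) *
      diagonal ((↑) ∘ (√·) ∘ h.1.eigenvalues) *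
      (star h.1.eigenvectorUnitary : Matrix (Fin d) (Fin d) ℝ)
  else 0

/-- Largest eigenvalue of a symmetric matrix (junk value `0` if not symmetric). -/
def lamMax {d : ℕ} (M : Matrix (Fin d) (Fin d) ℝ) : ℝ :=
  if h : M.IsHermitian then ⨆ i, h.eigenvalues i else 0

/-- Smallest eigenvalue of a symmetric matrix (junk value `0` if not symmetric). -/
def lamMin {d : ℕ} (M : Matrix (Fin d) (Fin d) ℝ) : ℝ :=
  if h : M.IsHermitian then ⨅ i, h.eigenvalues i else 0

/-- Smallest singular value. -/
def sigmaMin {d : ℕ} (M : Matrix (Fin d) (Fin d) ℝ) : ℝ := Real.sqrt (lamMin (Mᵀ * M))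

/-- Largest singular value (operator norm). -/
def sigmaMax {d : ℕ} (M : Matrix (Fin d) (Fin d) ℝ) : ℝ := Real.sqrt (lamMax (Mᵀ * M))

/-- Empirical covariance matrix `(1/n) ∑ᵢ WᵢWᵢᵀ`. -/
def empSigma {d n : ℕ} (W : Fin n → Fin d → ℝ) : Matrix (Fin d) (Fin d) ℝ :=
  (n : ℝ)⁻¹ • ∑ i, vecMulVec (W i) (W i)

/-- Empirical LSTDQ matrix `(1/n) ∑ᵢ Wᵢ(Wᵢ - γWᵢ')ᵀ`. -/
def empA {d n : ℕ} (γ : ℝ) (W W' : Fin n → Fin d → ℝ) : Matrix (Fin d) (Fin d) ℝ :=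
  (n : ℝ)⁻¹ • ∑ i, vecMulVec (W i) (W i - γ • W' i)

/-- Empirical LSTDQ vector `(1/n) ∑ᵢ RᵢWᵢ`. -/
def empb {d n : ℕ} (W : Fin n → Fin d → ℝ) (R : Fin n → ℝ) : Fin d → ℝ :=
  (n : ℝ)⁻¹ • ∑ i, R i • W i

lemma aux_vmv {d : ℕ} (u v x : Fin d → ℝ) : vecMulVec u v *ᵥ x = (v ⬝ᵥ x) • u := by
  ext i
  simp [vecMulVec, mulVec, dotProduct, Finset.mul_sum, mul_comm, mul_assoc, mul_left_comm]

lemma aux_vmvT {d : ℕ} (u v : Fin d → ℝ) : (vecMulVec u v)ᵀ = vecMulVec v u := by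
  ext i j; simp [vecMulVec, mul_comm]

lemma aux_sum_mulVec {d : ℕ} {Ω : Type} [Fintype Ω] (M : Ω → Matrix (Fin d) (Fin d) ℝ)
    (v : Fin d → ℝ) : (∑ ω, M ω) *ᵥ v = ∑ ω, M ω *ᵥ v := by
  ext i
  simp only [mulVec, dotProduct, Finset.sum_apply, Matrix.sum_apply, Finset.sum_mul]
  exact Finset.sum_comm

lemma aux_sum_dot {d : ℕ} {Ω : Type} [Fintype Ω] (f : Ω → Fin d → ℝ) (v : Fin d → ℝ) :
    (∑ ω, f ω) ⬝ᵥ v = ∑ ω, f ω ⬝ᵥ v := by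
  simp only [dotProduct, Finset.sum_apply, Finset.sum_mul]
  exact Finset.sum_comm

/-- Proposition 5.2 of the paper: under a bias feature, the mean on-policy
condition, and the spectral-radius condition, the feature-dynamics coverage is at most `1`. -/
theorem stmt5 (d : ℕ) (hd : 0 < d) (γ : ℝ) (hγ0 : 0 ≤ γ) (hγ1 : γ < 1)
    (Ω : Type) [Fintype Ω] (p : Ω → ℝ) (hp : ∀ ω, 0 ≤ p ω) (hpsum : ∑ ω, p ω = 1)
    (X X' : Ω → Fin d → ℝ) (φ₀ : Fin d → ℝ)
    (Sig Sigcr A Bpi : Matrix (Fin d) (Fin d) ℝ)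
    (hSigdef : Sig = ∑ ω, p ω • vecMulVec (X ω) (X ω))
    (hSiginv : IsUnit Sig.det)
    (hSigcr : Sigcr = ∑ ω, p ω • vecMulVec (X ω) (X' ω))
    (hA : A = Sig - γ • Sigcr) (hB : Bpi = (Sig⁻¹ * Sigcr)ᵀ)
    (θ₀ : Fin d → ℝ)
    (hbias : ∀ ω, 0 < p ω → X ω ⬝ᵥ θ₀ = 1 ∧ X' ω ⬝ᵥ θ₀ = 1)
    (hmeanX : ∑ ω, p ω • X ω = φ₀) (hmeanX' : ∑ ω, p ω • X' ω = φ₀)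
    (hspec : ∀ z ∈ spectrum ℂ (Bpi.map (Complex.ofReal : ℝ → ℂ)), γ * ‖z‖ < 1) :
    IsUnit A.det ∧
      (1 - γ) ^ 2 * (φ₀ ⬝ᵥ (A⁻¹ *ᵥ (Sig *ᵥ ((A⁻¹)ᵀ *ᵥ φ₀)))) ≤ 1 := by
  have h1γ : (1:ℝ) - γ ≠ 0 := by linarith
  -- pointwise key sums
  have hterm : ∀ (Y Z : Ω → Fin d → ℝ), (∀ ω, 0 < p ω → Z ω ⬝ᵥ θ₀ = 1) →
      (∑ ω, p ω • vecMulVec (Y ω) (Z ω)) *ᵥ θ₀ = ∑ ω, p ω • Y ω := by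
    intro Y Z hZ
    rw [aux_sum_mulVec]
    refine Finset.sum_congr rfl fun ω _ => ?_
    rw [smul_mulVec, aux_vmv]
    rcases eq_or_lt_of_le (hp ω) with h | h
    · simp [← h]
    · rw [hZ ω h, one_smul]
  have hSigθ : Sig *ᵥ θ₀ = φ₀ := by
    rw [hSigdef, hterm X X (fun ω hω => (hbias ω hω).1), hmeanX]
  have hSigcrθ : Sigcr *ᵥ θ₀ = φ₀ := by
    rw [hSigcr, hterm X X' (fun ω hω => (hbias ω hω).2), hmeanX]
  have hSigcrTθ : Sigcrᵀ *ᵥ θ₀ = φ₀ := by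
    have : Sigcrᵀ = ∑ ω, p ω • vecMulVec (X' ω) (X ω) := by
      rw [hSigcr, Matrix.transpose_sum]
      exact Finset.sum_congr rfl fun ω _ => by rw [Matrix.transpose_smul, aux_vmvT]
    rw [this, hterm X' X (fun ω hω => (hbias ω hω).1), hmeanX']
  have hSigT : Sigᵀ = Sig := by
    rw [hSigdef, Matrix.transpose_sum]
    exact Finset.sum_congr rfl fun ω _ => by rw [Matrix.transpose_smul, aux_vmvT]
  have hAθ : A *ᵥ θ₀ = (1 - γ) • φ₀ := by
    rw [hA, Matrix.sub_mulVec, smul_mulVec, hSigθ, hSigcrθ, sub_smul, one_smul]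
  have hATθ : Aᵀ *ᵥ θ₀ = (1 - γ) • φ₀ := by
    rw [hA, Matrix.transpose_sub, Matrix.transpose_smul, Matrix.sub_mulVec,
      smul_mulVec, hSigT, hSigθ, hSigcrTθ, sub_smul, one_smul]
  have hdot : φ₀ ⬝ᵥ θ₀ = 1 := by
    rw [← hmeanX, aux_sum_dot, ← hpsum]
    refine Finset.sum_congr rfl fun ω _ => ?_
    rw [smul_dotProduct]
    rcases eq_or_lt_of_le (hp ω) with h | h
    · simp [← h]
    · rw [(hbias ω h).1]; simp
  -- invertibility of A
  have hγA : IsUnit A.det := by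
    have hfact : A = Sig * (1 - γ • (Sig⁻¹ * Sigcr)) := by
      rw [hA, Matrix.mul_sub, Matrix.mul_one, Matrix.mul_smul, ← Matrix.mul_assoc,
        Matrix.mul_nonsing_inv Sig hSiginv, Matrix.one_mul]
    rw [hfact, Matrix.det_mul]
    refine hSiginv.mul ?_
    rw [isUnit_iff_ne_zero]
    intro hdet0
    rcases eq_or_lt_of_le hγ0 with h0 | h0
    · rw [← h0] at hdet0; simp at hdet0
    -- pass to ℂ
    set M := Sig⁻¹ * Sigcr with hM
    have hγC : (γ : ℂ) ≠ 0 := by exact_mod_cast ne_of_gt h0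
    set Mc := M.map (Complex.ofReal : ℝ → ℂ) with hMc
    have hdetC : ((1 - γ • M).map (Complex.ofReal : ℝ → ℂ)).det = 0 := by
      have h := congrArg (Complex.ofRealHom) hdet0
      rw [RingHom.map_det, map_zero] at h
      exact h
    have hmap : (1 - γ • M).map (Complex.ofReal : ℝ → ℂ) = 1 - (γ : ℂ) • Mc := by
      ext i j
      by_cases hij : i = j <;>
        simp [hMc, Matrix.map_apply, Matrix.one_apply, Matrix.sub_apply, Matrix.smul_apply, hij]
    have hdet2 : (((γ : ℂ)⁻¹ • 1 - Mc)).det = 0 := by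
      have hsc : (1 : Matrix (Fin d) (Fin d) ℂ) - (γ : ℂ) • Mc
          = (γ : ℂ) • ((γ : ℂ)⁻¹ • 1 - Mc) := by
        rw [smul_sub, smul_smul, mul_inv_cancel₀ hγC, one_smul]
      rw [hmap, hsc, Matrix.det_smul] at hdetC
      rcases mul_eq_zero.mp hdetC with h | h
      · exact absurd h (pow_ne_zero _ hγC)
      · exact h
    have hz : ((γ : ℂ)⁻¹) ∈ spectrum ℂ (Bpi.map (Complex.ofReal : ℝ → ℂ)) := by
      rw [spectrum.mem_iff]
      intro hunit
      rw [Matrix.isUnit_iff_isUnit_det, isUnit_iff_ne_zero] at hunit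
      apply hunit
      have hBc : Bpi.map (Complex.ofReal : ℝ → ℂ) = Mcᵀ := by
        rw [hB]; ext i j; simp [hMc, Matrix.map_apply, Matrix.transpose_apply]
      rw [Algebra.algebraMap_eq_smul_one, hBc]
      have hT : ((γ : ℂ)⁻¹ • (1 : Matrix (Fin d) (Fin d) ℂ) - Mcᵀ)
          = ((γ : ℂ)⁻¹ • 1 - Mc)ᵀ := by
        rw [Matrix.transpose_sub, Matrix.transpose_smul, Matrix.transpose_one]
      rw [hT, Matrix.det_transpose, hdet2]
    have hlt := hspec _ hz
    have habs : ‖((γ : ℂ)⁻¹)‖ = γ⁻¹ := by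
      simp [abs_of_pos h0]
    rw [habs, mul_inv_cancel₀ (ne_of_gt h0)] at hlt
    exact lt_irrefl 1 hlt
  refine ⟨hγA, ?_⟩
  have hφ : φ₀ = (1 - γ)⁻¹ • (A *ᵥ θ₀) := by
    rw [hAθ, smul_smul, inv_mul_cancel₀ h1γ, one_smul]
  have hφT : φ₀ = (1 - γ)⁻¹ • (Aᵀ *ᵥ θ₀) := by
    rw [hATθ, smul_smul, inv_mul_cancel₀ h1γ, one_smul]
  have hAinv : A⁻¹ *ᵥ φ₀ = (1 - γ)⁻¹ • θ₀ := by
    have h1 : A⁻¹ *ᵥ (A *ᵥ θ₀) = θ₀ := by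
      rw [Matrix.mulVec_mulVec, Matrix.nonsing_inv_mul A hγA, Matrix.one_mulVec]
    rw [hφ, Matrix.mulVec_smul, h1]
  have hATinv : (A⁻¹)ᵀ *ᵥ φ₀ = (1 - γ)⁻¹ • θ₀ := by
    have hATu : IsUnit Aᵀ.det := by rwa [Matrix.det_transpose]
    have h1 : (Aᵀ)⁻¹ *ᵥ (Aᵀ *ᵥ θ₀) = θ₀ := by
      rw [Matrix.mulVec_mulVec, Matrix.nonsing_inv_mul Aᵀ hATu, Matrix.one_mulVec]
    rw [Matrix.transpose_nonsing_inv, hφT, Matrix.mulVec_smul, h1]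
  rw [hATinv, Matrix.mulVec_smul, hSigθ, Matrix.mulVec_smul, hAinv,
    dotProduct_smul, dotProduct_smul, hdot]
  have : (1 - γ) ^ 2 * ((1 - γ)⁻¹ • ((1 - γ)⁻¹ • (1:ℝ))) = 1 := by
    rw [smul_eq_mul, smul_eq_mul, mul_one, ← mul_inv, ← sq, mul_inv_cancel₀ (pow_ne_zero 2 h1γ)]
  rw [this]


end
end

section
/- Let d be a positive integer and I a finite index set with nonnegative weights ν : I → ℝ summing to 1. Let φᵢ ∈ ℝ^d for i ∈ I, let Â be an invertible d×d real matrix, Σ̂ a d×d symmetric positive definite matrix, b̂ ∈ ℝ^d, θ̂ := Â⁻¹·b̂, and θ* ∈ ℝ^d arbitrary. Then Σᵢ ν(i)·(φᵢᵀ(θ* − θ̂))² ≤ (Σᵢ ν(i)·‖Σ̂^{1/2}·Â⁻ᵀ·φᵢ‖₂²) · ‖Σ̂^{−1/2}·(Â·θ* − b̂)‖₂². -/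
open Matrix MeasureTheory ProbabilityTheory
open scoped Classical

noncomputable section

lemma norm2_sq_eq {d : ℕ} (v : Fin d → ℝ) : norm2 v ^ 2 = v ⬝ᵥ v := by
  rw [norm2, Real.sq_sqrt]
  exact Finset.sum_nonneg fun i _ => mul_self_nonneg _

/-- deterministic core of the function-estimation guarantee,
Theorem D.1 of the paper. -/
theorem stmt14 (d : ℕ) (hd : 0 < d) (I : Type) [Fintype I] (ν : I → ℝ)
    (hν : ∀ i, 0 ≤ ν i) (hνsum : ∑ i, ν i = 1) (φ : I → Fin d → ℝ)
    (Ahat Sighat : Matrix (Fin d) (Fin d) ℝ) (hA : IsUnit Ahat.det) (hSig : Sighat.PosDef)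
    (bhat θstar θhat : Fin d → ℝ) (hθ : θhat = Ahat⁻¹ *ᵥ bhat) :
    ∑ i, ν i * (φ i ⬝ᵥ (θstar - θhat)) ^ 2 ≤
      (∑ i, ν i * norm2 (psdSqrt Sighat *ᵥ ((Ahat⁻¹)ᵀ *ᵥ φ i)) ^ 2) *
        norm2 ((psdSqrt Sighat)⁻¹ *ᵥ (Ahat *ᵥ θstar - bhat)) ^ 2 := by
  set S := psdSqrt Sighat with hSdef
  have hS : S = (hSig.posSemidef.1.eigenvectorUnitary : Matrix (Fin d) (Fin d) ℝ) *
      (diagonal ((↑) ∘ (√·) ∘ hSig.posSemidef.1.eigenvalues) : Matrix (Fin d) (Fin d) ℝ) *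
      (star hSig.posSemidef.1.eigenvectorUnitary : Matrix (Fin d) (Fin d) ℝ) := by rw [hSdef, psdSqrt, dif_pos hSig.posSemidef]
  have hSsym : Sᵀ = S := by
    rw [hS]
    simp [Matrix.transpose_mul, Matrix.star_eq_conjTranspose, Matrix.mul_assoc]
  have hSdet : IsUnit S.det := by
    have h1 : S * S = Sighat := by
      have h1 := hSig.posSemidef.1.spectral_theorem
      rw [Unitary.conjStarAlgAut_apply] at h1
      conv_rhs => rw [h1]
      rw [hS]
      have hu : (star hSig.posSemidef.1.eigenvectorUnitary : Matrix (Fin d) (Fin d) ℝ) * (hSig.posSemidef.1.eigenvectorUnitary : Matrix (Fin d) (Fin d) ℝ) = 1 := Unitary.coe_star_mul_self _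
      have hD : (diagonal ((↑) ∘ (√·) ∘ hSig.posSemidef.1.eigenvalues) : Matrix (Fin d) (Fin d) ℝ) * (diagonal ((↑) ∘ (√·) ∘ hSig.posSemidef.1.eigenvalues) : Matrix (Fin d) (Fin d) ℝ) =
          diagonal (RCLike.ofReal ∘ hSig.posSemidef.1.eigenvalues) := by
        rw [diagonal_mul_diagonal]
        congr 1; funext i
        simp [Real.mul_self_sqrt (hSig.posSemidef.eigenvalues_nonneg i)]
      calc _ = (hSig.posSemidef.1.eigenvectorUnitary : Matrix (Fin d) (Fin d) ℝ) * ((diagonal ((↑) ∘ (√·) ∘ hSig.posSemidef.1.eigenvalues) : Matrix (Fin d) (Fin d) ℝ) * ((star hSig.posSemidef.1.eigenvectorUnitary : Matrix (Fin d) (Fin d) ℝ) * (hSig.posSemidef.1.eigenvectorUnitary : Matrix (Fin d) (Fin d) ℝ)) * (diagonal ((↑) ∘ (√·) ∘ hSig.posSemidef.1.eigenvalues) : Matrix (Fin d) (Fin d) ℝ)) * (star hSig.posSemidef.1.eigenvectorUnitary : Matrix (Fin d) (Fin d) ℝ) := by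
            simp only [Matrix.mul_assoc]
        _ = _ := by rw [hu, Matrix.mul_one, hD]
    have h2 : S.det * S.det = Sighat.det := by rw [← Matrix.det_mul, h1]
    have : Sighat.det ≠ 0 := ne_of_gt hSig.det_pos
    exact isUnit_iff_ne_zero.2 fun h => this (by rw [← h2, h, zero_mul])
  set r := Ahat *ᵥ θstar - bhat with hr
  set y := S⁻¹ *ᵥ r with hy
  -- key identity
  have key : ∀ i : I, φ i ⬝ᵥ (θstar - θhat) = (S *ᵥ ((Ahat⁻¹)ᵀ *ᵥ φ i)) ⬝ᵥ y := by
    intro i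
    have h1 : θstar - θhat = Ahat⁻¹ *ᵥ r := by
      rw [hθ, hr, Matrix.mulVec_sub, Matrix.mulVec_mulVec, Matrix.nonsing_inv_mul _ hA,
        Matrix.one_mulVec]
    have h2 : S *ᵥ y = r := by
      rw [hy, Matrix.mulVec_mulVec, Matrix.mul_nonsing_inv _ hSdet, Matrix.one_mulVec]
    calc φ i ⬝ᵥ (θstar - θhat) = φ i ⬝ᵥ (Ahat⁻¹ *ᵥ (S *ᵥ y)) := by rw [h1, h2]
      _ = ((Ahat⁻¹)ᵀ *ᵥ φ i) ⬝ᵥ (S *ᵥ y) := by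
          rw [Matrix.dotProduct_mulVec, Matrix.mulVec_transpose]
      _ = (S *ᵥ ((Ahat⁻¹)ᵀ *ᵥ φ i)) ⬝ᵥ y := by
          rw [Matrix.dotProduct_mulVec]
          congr 1
          conv_rhs => rw [← hSsym]
          simp only [Matrix.mulVec_transpose]
  calc ∑ i, ν i * (φ i ⬝ᵥ (θstar - θhat)) ^ 2
      ≤ ∑ i, ν i * (norm2 (S *ᵥ ((Ahat⁻¹)ᵀ *ᵥ φ i)) ^ 2 * norm2 y ^ 2) := by
        refine Finset.sum_le_sum fun i _ => mul_le_mul_of_nonneg_left ?_ (hν i)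
        rw [key i, norm2_sq_eq, norm2_sq_eq]
        simpa only [dotProduct, pow_two] using
          Finset.sum_mul_sq_le_sq_mul_sq Finset.univ
            (S *ᵥ ((Ahat⁻¹)ᵀ *ᵥ φ i)) y
    _ = (∑ i, ν i * norm2 (S *ᵥ ((Ahat⁻¹)ᵀ *ᵥ φ i)) ^ 2) * norm2 y ^ 2 := by
        rw [Finset.sum_mul]; simp [mul_assoc]

end
end
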